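/- Let k > l > 2 and let σ1 ∈ S_k be given by σ1(1) = l, σ1(i) = l−i for 2 ≤ i ≤ l−2, σ1(l−1) = k, σ1(l) = 1, σ1(i) = l+k−i for l+1 ≤ i ≤ k−1, and σ1(k) = l−1. Suppose σ ∈ S_k satisfies σ ≤ σ1 in the Bruhat order and D(σ) ∪ D(σ^{−1}) ⊆ {l−2, l, k}. Then σ is one of the following four permutations: (i) σ = σ1; (ii) σ(1) = l, σ(i) = l−i for 2 ≤ i ≤ l−2, σ(l−1) = l−1, σ(l) = 1, σ(i) = k+l+1−i for l+1 ≤ i ≤ k; (iii) σ(i) = l−1−i for 1 ≤ i ≤ l−2, σ(l−1) = k, σ(l) = l, σ(i) = k+l−i for l+1 ≤ i ≤ k−1, σ(k) = l−1; (iv) σ(i) = l−1−i for 1 ≤ i ≤ l−2, σ(l−1) = l, σ(l) = l−1, σ(i) = k+l+1−i for l+1 ≤ i ≤ k. -/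

import Mathlib

/-! ## Segments and multisegments -/

structure Segment where
  a : ℤ
  b : ℤ
  nonempty : a ≤ b

namespace Segment

/-- `Δ ≺ Δ'`. -/
def prec (Δ Δ' : Segment) : Prop :=
  Δ.a < Δ'.a ∧ Δ'.a ≤ Δ.b + 1 ∧ Δ.b < Δ'.b

def linked (Δ Δ' : Segment) : Prop := prec Δ Δ' ∨ prec Δ' Δ

/-- `←Δ = [a-1, b-1]`. -/
def shiftl (Δ : Segment) : Segment :=
  ⟨Δ.a - 1, Δ.b - 1, by have := Δ.nonempty; omega⟩

end Segment

abbrev Multisegment := Multiset Segment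

/-- `Step m n` means `m ⊢ n`: `m` is obtained from `n` by replacing a pair of linked
segments of `n` by its offspring. -/
def Step (m n : Multisegment) : Prop :=
  ∃ (Δ Δ' : Segment) (r : Multisegment),
    Segment.prec Δ Δ' ∧ n = Δ ::ₘ Δ' ::ₘ r ∧
    ((Δ'.a ≤ Δ.b ∧ ∃ E F : Segment,
        E.a = Δ.a ∧ E.b = Δ'.b ∧ F.a = Δ'.a ∧ F.b = Δ.b ∧ m = E ::ₘ F ::ₘ r) ∨
     (Δ'.a = Δ.b + 1 ∧ ∃ E : Segment, E.a = Δ.a ∧ E.b = Δ'.b ∧ m = E ::ₘ r))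

/-- `Obt m n` means `m ⊨ n`: reflexive-transitive closure of `⊢`. -/
def Obt : Multisegment → Multisegment → Prop := Relation.ReflTransGen Step

def PairwiseUnlinked (m : Multisegment) : Prop :=
  ∀ (Δ Δ' : Segment) (r : Multisegment), m = Δ ::ₘ Δ' ::ₘ r → ¬ Segment.linked Δ Δ'

/-- `StepN l m n` : there is a chain of `l` steps `m = m_l ⊢ m_{l-1} ⊢ ⋯ ⊢ m_1 ⊢ n`. -/
def StepN : ℕ → Multisegment → Multisegment → Prop
  | 0, m, n => m = n
  | l + 1, m, n => ∃ p, Step m p ∧ StepN l p n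

/-- The complexity `c(m)`: the maximal `l` for which there is a chain of `l` steps ending at `m`. -/
noncomputable def complexity (m : Multisegment) : ℕ :=
  sSup {l : ℕ | ∃ m', StepN l m' m}

/-- Almost pairwise unlinked. -/
def APU (m : Multisegment) : Prop :=
  ∃ m', PairwiseUnlinked m' ∧ Step m' m

/-- The depth `d(m)`: the number of APU multisegments `n` with `n ⊨ m`. -/
noncomputable def depth (m : Multisegment) : ℕ :=
  {n : Multisegment | APU n ∧ Obt n m}.ncard

def Regular (m : Multisegment) : Prop :=
  (m.map Segment.a).Nodup ∧ (m.map Segment.b).Nodup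

def IsBalanced (m : Multisegment) : Prop :=
  Regular m ∧ depth m = complexity m

/-! ## Enumerated multisegments and the (GLS) condition -/

/-- The multisegment `Δ_0 + ⋯ + Δ_{k-1}` attached to an enumeration `Δ : ℕ → Segment`. -/
def msOf (k : ℕ) (Δ : ℕ → Segment) : Multisegment :=
  ↑((List.range k).map Δ)

def Xset (k : ℕ) (Δ : ℕ → Segment) : Set (ℕ × ℕ) :=
  {p | p.1 < k ∧ p.2 < k ∧ (Δ p.1).prec (Δ p.2)}

def Xtil (k : ℕ) (Δ : ℕ → Segment) : Set (ℕ × ℕ) :=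
  {p | p.1 < k ∧ p.2 < k ∧ ((Δ p.1).shiftl).prec (Δ p.2)}

open Classical in
/-- The vector `x_{i,j}(λ) ∈ ℂ^{X̃_m}` (viewed inside the functions `ℕ × ℕ → ℂ`). -/
noncomputable def glsVec (k : ℕ) (Δ : ℕ → Segment) (lam : ℕ → ℕ → ℂ) (i j : ℕ) :
    ℕ × ℕ → ℂ := fun p =>
  (if p.1 = i ∧ (p.2, j) ∈ Xset k Δ ∧ (i, p.2) ∈ Xtil k Δ then lam p.2 j else 0) -
  (if p.2 = j ∧ (p.1, j) ∈ Xtil k Δ ∧ (i, p.1) ∈ Xset k Δ then lam i p.1 else 0)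

/-- Condition (GLS). -/
def GLS (k : ℕ) (Δ : ℕ → Segment) : Prop :=
  ∃ lam : ℕ → ℕ → ℂ,
    LinearIndependent ℂ (fun p : Xset k Δ => glsVec k Δ lam p.1.1 p.1.2)

/-- The relation `⤳` between `X_m` and `X̃_m`. -/
def leadsTo (Δ : ℕ → Segment) (x y : ℕ × ℕ) : Prop :=
  (x.1 = y.1 ∧ (Δ y.2).prec (Δ x.2)) ∨ (x.2 = y.2 ∧ (Δ x.1).prec (Δ y.1))

/-- `N_{i,j} = {y ∈ X̃_m : (i,j) ⤳ y}`. -/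
def Nset (k : ℕ) (Δ : ℕ → Segment) (x : ℕ × ℕ) : Set (ℕ × ℕ) :=
  {y ∈ Xtil k Δ | leadsTo Δ x y}

/-- The labelled relation `x ⤳^r y`. -/
def LabRel (k : ℕ) (Δ : ℕ → Segment) (x r y : ℕ × ℕ) : Prop :=
  (x.1 = y.1 ∧ r = (y.2, x.2) ∧ x ∈ Xset k Δ ∧ r ∈ Xset k Δ ∧ y ∈ Xtil k Δ) ∨
  (x.2 = y.2 ∧ r = (x.1, y.1) ∧ x ∈ Xset k Δ ∧ r ∈ Xset k Δ ∧ y ∈ Xtil k Δ)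

/-- Multisegments of type 4231. -/
def Type4231 (m : Multisegment) : Prop :=
  ∃ (k : ℕ) (Δ : ℕ → Segment), 4 ≤ k ∧ m = msOf k Δ ∧ Regular m ∧
    (∀ i j, i < j → j < k → (Δ j).b < (Δ i).b) ∧
    (∀ i, 2 ≤ i → i + 1 < k → (Δ (i + 1)).prec (Δ i)) ∧
    (Δ 2).prec (Δ 0) ∧
    (Δ (k - 1)).a < (Δ 1).a ∧ (Δ 1).a < (Δ (k - 2)).a

/-- Multisegments of type 3412. -/
def Type3412 (m : Multisegment) : Prop :=
  ∃ (k : ℕ) (Δ : ℕ → Segment), 4 ≤ k ∧ m = msOf k Δ ∧ Regular m ∧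
    (∀ i j, i < j → j < k → (Δ j).b < (Δ i).b) ∧
    (∀ i, 3 ≤ i → i + 1 < k → (Δ (i + 1)).prec (Δ i)) ∧
    (Δ 3).prec (Δ 1) ∧
    (Δ 2).a < (Δ (k - 1)).a ∧ (Δ (k - 1)).a < (Δ 0).a ∧
    (Δ 0).a < (Δ (if k = 4 then 1 else k - 2)).a

/-- `Δ_i` is a detachable segment of `Δ_0 + ⋯ + Δ_{k-1}`. -/
def Detachable (k : ℕ) (Δ : ℕ → Segment) (i : ℕ) : Prop :=
  (∀ j, j < k → j ≠ i → ¬ (Δ i).prec (Δ j) ∧ ¬ ((Δ i).shiftl).prec (Δ j)) ∨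
  (∀ j, j < k → j ≠ i → ¬ (Δ j).prec (Δ i) ∧ ¬ ((Δ j).shiftl).prec (Δ i))

/-! ## Permutations, Bruhat order, smooth pairs -/

/-- The rank function `r_σ(i,j)` (0-based). -/
def rankFn {k : ℕ} (σ : Equiv.Perm (Fin k)) (i j : Fin k) : ℕ :=
  (Finset.univ.filter fun u : Fin k => u ≤ i ∧ σ u ≤ j).card

/-- The Bruhat order, via the rank-function characterization. -/
def BruhatLE {k : ℕ} (τ σ : Equiv.Perm (Fin k)) : Prop :=
  ∀ i j : Fin k, rankFn σ i j ≤ rankFn τ i j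

/-- The length `ℓ(σ)`. -/
def lenPerm {k : ℕ} (σ : Equiv.Perm (Fin k)) : ℕ :=
  (Finset.univ.filter fun p : Fin k × Fin k => p.1 < p.2 ∧ σ p.2 < σ p.1).card

def IsTransposition {k : ℕ} (t : Equiv.Perm (Fin k)) : Prop :=
  ∃ i j : Fin k, i ≠ j ∧ t = Equiv.swap i j

/-- `(σ, σ0)` is a smooth pair. -/
def SmoothPair {k : ℕ} (σ0 σ : Equiv.Perm (Fin k)) : Prop :=
  BruhatLE σ0 σ ∧
    {t : Equiv.Perm (Fin k) | IsTransposition t ∧ BruhatLE (σ0 * t) σ}.ncard = lenPerm σ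

/-- The ascent set `D(σ)` of a permutation, in 1-based indexing. -/
def Dset {k : ℕ} (σ : Equiv.Perm (Fin k)) : Set ℕ :=
  {i | ∃ (h1 : 1 ≤ i) (h2 : i < k), (σ ⟨i - 1, by omega⟩ : ℕ) < (σ ⟨i, h2⟩ : ℕ)} ∪ {k}

/-- The flattened permutation `rmv_i(σ)`. -/
def rmv {k : ℕ} (σ : Equiv.Perm (Fin (k + 1))) (i : Fin (k + 1)) : Equiv.Perm (Fin k) :=
  ((finSuccAboveEquiv i).trans
    (σ.subtypeEquiv fun x => not_congr (EmbeddingLike.apply_eq_iff_eq σ).symm)).trans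
    (finSuccAboveEquiv (σ i)).symm

/-! ## Bi-sequences -/

structure BiSeq (k : ℕ) where
  a : Fin k → ℤ
  b : Fin k → ℤ
  mono_a : Monotone a
  anti_b : Antitone b
  compat : ∀ i : Fin k, a i.rev ≤ b i + 1

def RegularBS {k : ℕ} (A : BiSeq k) : Prop := StrictMono A.a ∧ StrictAnti A.b

/-- `σ` satisfies the defining recursion of `σ0(A)`. -/
def Sigma0Spec {k : ℕ} (A : BiSeq k) (σ : Equiv.Perm (Fin k)) : Prop :=
  ∀ i : Fin k,
    A.a (σ.symm i) ≤ A.b i + 1 ∧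
    ∀ j : Fin k, A.a j ≤ A.b i + 1 → (∀ i' : Fin k, i < i' → σ.symm i' ≠ j) →
      j ≤ σ.symm i

def Avoids213 {k : ℕ} (σ : Equiv.Perm (Fin k)) : Prop :=
  ¬ ∃ i j l : Fin k, i < j ∧ j < l ∧ σ j < σ i ∧ σ i < σ l

/-- The multisegment `m_σ(A)`, consisting of the nonempty intervals among
`[a_{σ⁻¹(i)}, b_i]`. -/
def mOf {k : ℕ} (A : BiSeq k) (σ : Equiv.Perm (Fin k)) : Multisegment :=
  ((Finset.univ.filter fun i : Fin k => A.a (σ.symm i) ≤ A.b i).attach.val).map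
    fun i => { a := A.a (σ.symm i.1), b := A.b i.1,
               nonempty := by have := Finset.mem_filter.mp i.2; exact this.2 }

/-! ## Permutation matrices -/

def PermMat {k : ℕ} (σ : Equiv.Perm (Fin k)) : Matrix (Fin k) (Fin k) ℕ :=
  fun i j => if σ i = j then 1 else 0

/-- The equivalence relation generated by `i ∼ j` whenever `M_{i,l} = M_{j,l} = 1` for some `l`. -/
def matRel {k : ℕ} (M : Matrix (Fin k) (Fin k) ℕ) : Fin k → Fin k → Prop :=
  Relation.EqvGen (fun i j => ∃ l, M i l = 1 ∧ M j l = 1)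


section Statement13Aux

private lemma st13_chain_dec (F : ℕ → ℕ) (P : ℕ → Prop) (hd : ∀ i, P i → F i < F (i - 1)) :
    ∀ a d, (∀ j, a < j → j ≤ a + d → P j) → F (a + d) + d ≤ F a := by
  intro a d
  induction d with
  | zero => intro _; simp
  | succ n ih =>
    intro hP
    have h1 : F (a + n + 1) < F (a + n) := by
      have := hd (a + n + 1) (hP _ (by omega) (by omega))
      simpa using this
    have h2 := ih (fun j hj1 hj2 => hP j hj1 (by omega))
    show F (a + n + 1) + (n + 1) ≤ F a
    omega

private lemma st13_pigeon (F : ℕ → ℕ) (k a b c : ℕ) (hab : a ≤ b) (hbk : b < k)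
    (hinj : ∀ i j, i < k → j < k → F i = F j → i = j)
    (hmem : ∀ i, a ≤ i → i ≤ b → F i ≤ c) : b - a ≤ c := by
  have h := Finset.card_le_card_of_injOn F (s := Finset.Icc a b) (t := Finset.Iic c)
    (fun i hi => by
      simp only [Finset.mem_coe, Finset.mem_Icc] at hi
      exact Finset.mem_Iic.mpr (hmem i hi.1 hi.2))
    (fun i hi j hj hij => by
      simp only [Finset.coe_Icc, Set.mem_Icc] at hi hj
      exact hinj i j (by omega) (by omega) hij)
  rw [Nat.card_Icc, Nat.card_Iic] at h
  omega

private lemma st13_rank_lb {k : ℕ} (σ : Equiv.Perm (Fin k)) (i j : Fin k) (c : ℕ) (e : ℕ → Fin k)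
    (hinj : ∀ m n, m < c → n < c → e m = e n → m = n)
    (hmem : ∀ n, n < c → e n ≤ i ∧ σ (e n) ≤ j) : c ≤ rankFn σ i j := by
  have h := Finset.card_le_card_of_injOn e (s := Finset.range c)
      (t := Finset.univ.filter fun u : Fin k => u ≤ i ∧ σ u ≤ j)
      (fun n hn => by
        simp only [Finset.mem_coe, Finset.mem_filter, Finset.mem_univ, true_and]
        exact hmem n (Finset.mem_range.mp hn))
      (fun m hm n hn hmn => by
        simp only [Finset.coe_range, Set.mem_Iio] at hm hn
        exact hinj m n hm hn hmn)
  simpa [rankFn] using h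

private lemma st13_rank_row_full {k : ℕ} (σ : Equiv.Perm (Fin k)) (i j : Fin k)
    (h : (i : ℕ) + 1 ≤ rankFn σ i j) : ∀ u, u ≤ i → σ u ≤ j := by
  have hsub : (Finset.univ.filter fun u : Fin k => u ≤ i ∧ σ u ≤ j) ⊆ Finset.Iic i := by
    intro u hu
    simp only [Finset.mem_filter] at hu
    exact Finset.mem_Iic.mpr hu.2.1
  have hcard : (Finset.Iic i).card ≤ (Finset.univ.filter fun u : Fin k => u ≤ i ∧ σ u ≤ j).card := by
    rw [Fin.card_Iic]
    exact h
  have heq := Finset.eq_of_subset_of_card_le hsub hcard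
  intro u hu
  have hmem : u ∈ Finset.Iic i := Finset.mem_Iic.mpr hu
  rw [← heq] at hmem
  simp only [Finset.mem_filter] at hmem
  exact hmem.2.2

private lemma st13_rank_col_full {k : ℕ} (σ : Equiv.Perm (Fin k)) (i j : Fin k)
    (h : (j : ℕ) + 1 ≤ rankFn σ i j) : ∀ v, v ≤ j → σ.symm v ≤ i := by
  have hsub : (Finset.univ.filter fun u : Fin k => u ≤ i ∧ σ u ≤ j).image σ ⊆ Finset.Iic j := by
    intro v hv
    obtain ⟨u, hu, rfl⟩ := Finset.mem_image.mp hv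
    simp only [Finset.mem_filter] at hu
    exact Finset.mem_Iic.mpr hu.2.2
  have hcard : (Finset.Iic j).card ≤ ((Finset.univ.filter fun u : Fin k => u ≤ i ∧ σ u ≤ j).image σ).card := by
    rw [Fin.card_Iic, Finset.card_image_of_injective _ σ.injective]
    exact h
  have heq := Finset.eq_of_subset_of_card_le hsub hcard
  intro v hv
  have hmem : v ∈ (Finset.univ.filter fun u : Fin k => u ≤ i ∧ σ u ≤ j).image σ := by
    rw [heq]; exact Finset.mem_Iic.mpr hv
  obtain ⟨u, hu, huv⟩ := Finset.mem_image.mp hmem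
  simp only [Finset.mem_filter] at hu
  have hs : σ.symm v = u := by rw [← huv]; exact σ.symm_apply_apply u
  rw [hs]
  exact hu.2.1

private lemma st13_rank_ub2 {k : ℕ} (σ : Equiv.Perm (Fin k)) (i j u1 u2 : Fin k)
    (h12 : u1 ≠ u2) (h1 : u1 ≤ i) (h2 : u2 ≤ i)
    (hs1 : ¬ σ u1 ≤ j) (hs2 : ¬ σ u2 ≤ j) : rankFn σ i j + 2 ≤ (i : ℕ) + 1 := by
  have hsub : (Finset.univ.filter fun u : Fin k => u ≤ i ∧ σ u ≤ j) ⊆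
      ((Finset.Iic i).erase u1).erase u2 := by
    intro u hu
    simp only [Finset.mem_filter] at hu
    refine Finset.mem_erase.mpr ⟨?_, Finset.mem_erase.mpr ⟨?_, Finset.mem_Iic.mpr hu.2.1⟩⟩
    · rintro rfl; exact hs2 hu.2.2
    · rintro rfl; exact hs1 hu.2.2
  have hc := Finset.card_le_card hsub
  have e1 : u1 ∈ Finset.Iic i := Finset.mem_Iic.mpr h1
  have e2 : u2 ∈ (Finset.Iic i).erase u1 :=
    Finset.mem_erase.mpr ⟨fun h => h12 h.symm, Finset.mem_Iic.mpr h2⟩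
  have c1 : ((Finset.Iic i).erase u1).card = (i : ℕ) + 1 - 1 := by
    rw [Finset.card_erase_of_mem e1, Fin.card_Iic]
  have c2 : (((Finset.Iic i).erase u1).erase u2).card = (i : ℕ) + 1 - 1 - 1 := by
    rw [Finset.card_erase_of_mem e2, c1]
  have hi1 : (1 : ℕ) ≤ (i : ℕ) := by
    by_contra hcon
    have hv1 : (u1 : ℕ) ≤ (i : ℕ) := h1
    have hv2 : (u2 : ℕ) ≤ (i : ℕ) := h2
    exact h12 (Fin.ext (by omega))
  have hr : rankFn σ i j ≤ (i : ℕ) + 1 - 1 - 1 := by rw [← c2]; exact hc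
  omega

end Statement13Aux

set_option maxHeartbeats 1000000 in
private lemma st13_comb (k l : ℕ) (hl : 2 < l) (hk : l < k) (f g : ℕ → ℕ)
    (hflt : ∀ i, i < k → f i < k)
    (hglt : ∀ i, i < k → g i < k)
    (hgf : ∀ i, i < k → g (f i) = i)
    (hfg : ∀ v, v < k → f (g v) = v)
    (hdecf : ∀ i, 0 < i → i < k → i ≠ l - 2 → i ≠ l → f i < f (i - 1))
    (hdecg : ∀ i, 0 < i → i < k → i ≠ l - 2 → i ≠ l → g i < g (i - 1))
    (F1 : f 0 ≤ l - 1)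
    (F3 : ∀ v, v ≤ l - 3 → g v ≤ l - 1)
    (F4 : f (l - 1) ≤ l - 1)
    (F5 : l - 2 ≤ f 0 → ∀ u, 1 ≤ u → u ≤ l - 3 → f u ≤ l - 3) :
    (∀ i, i < k → f i + 1 =
      if i + 1 = 1 then l
      else if i + 1 ≤ l - 2 then l - (i + 1)
      else if i + 1 = l - 1 then k
      else if i + 1 = l then 1
      else if i + 1 = k then l - 1
      else l + k - (i + 1)) ∨
    (∀ i, i < k → f i + 1 =
      if i + 1 = 1 then l
      else if i + 1 ≤ l - 2 then l - (i + 1)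
      else if i + 1 = l - 1 then l - 1
      else if i + 1 = l then 1
      else k + l + 1 - (i + 1)) ∨
    (∀ i, i < k → f i + 1 =
      if i + 1 ≤ l - 2 then l - 1 - (i + 1)
      else if i + 1 = l - 1 then k
      else if i + 1 = l then l
      else if i + 1 = k then l - 1
      else k + l - (i + 1)) ∨
    (∀ i, i < k → f i + 1 =
      if i + 1 ≤ l - 2 then l - 1 - (i + 1)
      else if i + 1 = l - 1 then l
      else if i + 1 = l then l - 1
      else k + l + 1 - (i + 1)) := by
  have hk0 : 0 < k := by omega
  have hl1k : l - 1 < k := by omega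
  have hl2k : l - 2 < k := by omega
  have hl3k : l - 3 < k := by omega
  have hinjf : ∀ i j, i < k → j < k → f i = f j → i = j := by
    intro i j hi hj hij
    have h1 := hgf i hi
    have h2 := hgf j hj
    rw [hij] at h1
    omega
  have hinjg : ∀ i j, i < k → j < k → g i = g j → i = j := by
    intro i j hi hj hij
    have h1 := hfg i hi
    have h2 := hfg j hj
    rw [hij] at h1
    omega
  have hchainf := st13_chain_dec f (fun i => 0 < i ∧ i < k ∧ i ≠ l - 2 ∧ i ≠ l)
    (fun i hi => hdecf i hi.1 hi.2.1 hi.2.2.1 hi.2.2.2)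
  have hchaing := st13_chain_dec g (fun i => 0 < i ∧ i < k ∧ i ≠ l - 2 ∧ i ≠ l)
    (fun i hi => hdecg i hi.1 hi.2.1 hi.2.2.1 hi.2.2.2)
  have df1 : ∀ a b, a ≤ b → b ≤ l - 3 → f b + (b - a) ≤ f a := by
    intro a b hab hb
    have hc := hchainf a (b - a) (fun j h1 h2 => ⟨by omega, by omega, by omega, by omega⟩)
    have he : a + (b - a) = b := by omega
    rw [he] at hc
    exact hc
  have df3 : ∀ a b, l ≤ a → a ≤ b → b < k → f b + (b - a) ≤ f a := by
    intro a b ha hab hb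
    have hc := hchainf a (b - a) (fun j h1 h2 => ⟨by omega, by omega, by omega, by omega⟩)
    have he : a + (b - a) = b := by omega
    rw [he] at hc
    exact hc
  have df2 : f (l - 1) < f (l - 2) := by
    have h := hdecf (l - 1) (by omega) hl1k (by omega) (by omega)
    have he : l - 1 - 1 = l - 2 := by omega
    rw [he] at h
    exact h
  have dg1 : ∀ a b, a ≤ b → b ≤ l - 3 → g b + (b - a) ≤ g a := by
    intro a b hab hb
    have hc := hchaing a (b - a) (fun j h1 h2 => ⟨by omega, by omega, by omega, by omega⟩)
    have he : a + (b - a) = b := by omega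
    rw [he] at hc
    exact hc
  have dg3 : ∀ a b, l ≤ a → a ≤ b → b < k → g b + (b - a) ≤ g a := by
    intro a b ha hab hb
    have hc := hchaing a (b - a) (fun j h1 h2 => ⟨by omega, by omega, by omega, by omega⟩)
    have he : a + (b - a) = b := by omega
    rw [he] at hc
    exact hc
  have dg2 : g (l - 1) < g (l - 2) := by
    have h := hdecg (l - 1) (by omega) hl1k (by omega) (by omega)
    have he : l - 1 - 1 = l - 2 := by omega
    rw [he] at h
    exact h
  clear hchainf hchaing
  have F6 : ∀ i, l ≤ i → i < k → l - 2 ≤ f i := by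
    intro i hi hik
    by_contra h
    push_neg at h
    have h2 := F3 (f i) (by omega)
    rw [hgf i hik] at h2
    omega
  by_cases hA : f 0 ≤ l - 3
  · -- Case A : cases (iii) and (iv)
    have hA1 : ∀ i, i ≤ l - 3 → f i = l - 3 - i := by
      intro i hi
      have h1 := df1 0 i (by omega) hi
      have h2 := df1 i (l - 3) hi (le_refl _)
      omega
    have hA2 : ∀ i, l - 2 ≤ i → i < k → l - 2 ≤ f i := by
      intro i hi hik
      by_contra hcc
      push_neg at hcc
      have h1 := hA1 (l - 3 - f i) (by omega)
      have h2 := hinjf i (l - 3 - f i) hik (by omega) (by omega)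
      omega
    have hfl1r : l - 2 ≤ f (l - 1) := hA2 (l - 1) (by omega) hl1k
    by_cases hiv : f (l - 1) = l - 2
    · -- case (iv)
      have hd2 := df2
      have hgl2 : g (l - 2) = l - 1 := by
        have h := hgf (l - 1) hl1k
        rw [hiv] at h
        exact h
      have hfl2 : f (l - 2) = l - 1 := by
        by_contra hne
        have hge : l ≤ f (l - 2) := by
          have := hA2 (l - 2) (le_refl _) hl2k
          omega
        have hpk : g (l - 1) < k := hglt _ hl1k
        have hfp : f (g (l - 1)) = l - 1 := hfg (l - 1) hl1k
        have hpge : l ≤ g (l - 1) := by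
          by_contra hp
          push_neg at hp
          rcases Nat.lt_or_ge (g (l - 1)) (l - 2) with h | h
          · have := hA1 (g (l - 1)) (by omega); omega
          · have h1 : g (l - 1) = l - 2 ∨ g (l - 1) = l - 1 := by omega
            rcases h1 with h1 | h1 <;> rw [h1] at hfp <;> omega
        have := dg2
        omega
      have hP3 : ∀ i, l ≤ i → i < k → f i = k + l - 1 - i := by
        have hge : ∀ i, l ≤ i → i < k → l ≤ f i := by
          intro i hi hik
          have h6 := F6 i hi hik
          have hne1 : f i ≠ l - 2 := fun h => by
            have := hinjf i (l - 1) hik hl1k (by rw [h, hiv])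
            omega
          have hne2 : f i ≠ l - 1 := fun h => by
            have := hinjf i (l - 2) hik hl2k (by rw [h, hfl2])
            omega
          omega
        intro i hi hik
        have h1 := df3 l i (le_refl _) hi hik
        have h2 := df3 i (k - 1) hi (by omega) (by omega)
        have h3 := hge (k - 1) (by omega) (by omega)
        have h4 := hflt l (by omega)
        have h5 := hge i hi hik
        omega
      right; right; right
      intro i hik
      by_cases h1 : i ≤ l - 3
      · have := hA1 i h1
        split_ifs <;> omega
      by_cases h2 : i = l - 2
      · rw [h2, hfl2]
        split_ifs <;> omega
      by_cases h3 : i = l - 1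
      · rw [h3, hiv]
        split_ifs <;> omega
      · have := hP3 i (by omega) hik
        split_ifs <;> omega
    · -- case (iii)
      have hfl1 : f (l - 1) = l - 1 := by omega
      have hd2 := df2
      have hge2 : l ≤ f (l - 2) := by omega
      have hbig : ∀ v, l ≤ v → v < k → v ≠ f (l - 2) → l ≤ g v := by
        intro v hv hvk hne
        by_contra hp
        push_neg at hp
        have hpk : g v < k := hglt v hvk
        have hfp : f (g v) = v := hfg v hvk
        rcases Nat.lt_or_ge (g v) (l - 2) with h | h
        · have := hA1 (g v) (by omega); omega
        · have h1 : g v = l - 2 ∨ g v = l - 1 := by omega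
          rcases h1 with h1 | h1 <;> rw [h1] at hfp
          · exact hne hfp.symm
          · omega
      have hfl2v : f (l - 2) = k - 1 := by
        by_contra hne
        have hvk : f (l - 2) < k := hflt (l - 2) hl2k
        have h1 : l ≤ g (f (l - 2) + 1) := hbig (f (l - 2) + 1) (by omega) (by omega) (by omega)
        have h2 := hgf (l - 2) hl2k
        have h3 := dg3 (f (l - 2)) (f (l - 2) + 1) (by omega) (by omega) (by omega)
        omega
      have hfk1 : f (k - 1) = l - 2 := by
        have hpk : g (l - 2) < k := hglt (l - 2) hl2k
        have hfp : f (g (l - 2)) = l - 2 := hfg (l - 2) hl2k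
        have hpge : l ≤ g (l - 2) := by
          by_contra hp
          push_neg at hp
          rcases Nat.lt_or_ge (g (l - 2)) (l - 2) with h | h
          · have := hA1 (g (l - 2)) (by omega); omega
          · have h1 : g (l - 2) = l - 2 ∨ g (l - 2) = l - 1 := by omega
            rcases h1 with h1 | h1 <;> rw [h1] at hfp <;> omega
        have hple : g (l - 2) = k - 1 := by
          by_contra hp2
          have h5 : g (l - 2) + 1 < k := by omega
          have h6 := hdecf (g (l - 2) + 1) (by omega) h5 (by omega) (by omega)
          rw [Nat.add_sub_cancel, hfp] at h6
          have := F6 (g (l - 2) + 1) (by omega) h5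
          omega
        rw [← hple]
        exact hfp
      have hP3 : ∀ i, l ≤ i → i ≤ k - 2 → f i = k + l - 2 - i := by
        have hrange : ∀ i, l ≤ i → i ≤ k - 2 → l ≤ f i ∧ f i ≤ k - 2 := by
          intro i hi hik
          have h6 := F6 i hi (by omega)
          have hne1 : f i ≠ l - 2 := fun h => by
            have := hinjf i (k - 1) (by omega) (by omega) (by rw [h, hfk1])
            omega
          have hne2 : f i ≠ l - 1 := fun h => by
            have := hinjf i (l - 1) (by omega) hl1k (by rw [h, hfl1])
            omega
          have hne3 : f i ≠ k - 1 := fun h => by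
            have := hinjf i (l - 2) (by omega) hl2k (by rw [h, hfl2v])
            omega
          have := hflt i (by omega)
          omega
        intro i hi hik
        have h1 := df3 l i (le_refl _) hi (by omega)
        have h2 := df3 i (k - 2) hi hik (by omega)
        have h3 := (hrange (k - 2) (by omega) (le_refl _)).1
        have h4 := (hrange l (le_refl _) (by omega)).2
        have h5 := (hrange i hi hik).1
        omega
      right; right; left
      intro i hik
      by_cases h1 : i ≤ l - 3
      · have := hA1 i h1
        split_ifs <;> omega
      by_cases h2 : i = l - 2
      · rw [h2, hfl2v]
        split_ifs <;> omega
      by_cases h3 : i = l - 1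
      · rw [h3, hfl1]
        split_ifs <;> omega
      by_cases h4 : i = k - 1
      · rw [h4, hfk1]
        split_ifs <;> omega
      · have := hP3 i (by omega) (by omega)
        split_ifs <;> omega
  · -- Case B : cases (i) and (ii)
    push_neg at hA
    have hB : l - 2 ≤ f 0 := by omega
    have hB1 : ∀ u, 1 ≤ u → u ≤ l - 3 → f u ≤ l - 3 := F5 hB
    have hgne0 : ∀ v, v ≤ l - 3 → g v ≠ 0 := by
      intro v hv hc
      have h := hfg v (by omega)
      rw [hc] at h
      omega
    have hB2 : l - 2 ≤ f (l - 2) := by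
      by_contra hc
      push_neg at hc
      have hd2 := df2
      have hp := st13_pigeon f k 1 (l - 1) (l - 3) (by omega) hl1k hinjf ?_
      · omega
      · intro i h1 h2
        by_cases h3 : i ≤ l - 3
        · exact hB1 i h1 h3
        · have h4 : i = l - 2 ∨ i = l - 1 := by omega
          rcases h4 with h4 | h4 <;> rw [h4] <;> omega
    have hgsmall : ∀ v, v ≤ l - 3 → g v ≤ l - 1 ∧ g v ≠ 0 ∧ g v ≠ l - 2 := by
      intro v hv
      refine ⟨F3 v hv, hgne0 v hv, ?_⟩
      intro hc
      have h := hfg v (by omega)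
      rw [hc] at h
      omega
    have hg0 : g 0 = l - 1 := by
      by_contra hc
      obtain ⟨h1, h2, h3⟩ := hgsmall 0 (by omega)
      obtain ⟨h4, h5, h6⟩ := hgsmall (l - 3) (le_refl _)
      have h7 := dg1 0 (l - 3) (by omega) (le_refl _)
      omega
    have hfl1B : f (l - 1) = 0 := by
      have h := hfg 0 (by omega)
      rw [hg0] at h
      exact h
    have hgB : ∀ v, 1 ≤ v → v ≤ l - 3 → g v = l - 2 - v := by
      intro v h1 h2
      obtain ⟨ha, hb, hc⟩ := hgsmall v (by omega)
      have hne : g v ≠ l - 1 := by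
        intro hcc
        have := hinjg v 0 (by omega) hk0 (by rw [hcc, hg0])
        omega
      obtain ⟨ha1, hb1, hc1⟩ := hgsmall 1 (by omega)
      have hne1 : g 1 ≠ l - 1 := by
        intro hcc
        have := hinjg 1 0 (by omega) hk0 (by rw [hcc, hg0])
        omega
      have h3 := dg1 v (l - 3) h2 (le_refl _)
      obtain ⟨ha3, hb3, hc3⟩ := hgsmall (l - 3) (le_refl _)
      have h4 := dg1 1 v h1 h2
      omega
    have hB4 : ∀ i, 1 ≤ i → i ≤ l - 3 → f i = l - 2 - i := by
      intro i h1 h2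
      have h3 := hgB (l - 2 - i) (by omega) (by omega)
      have h5 := hfg (l - 2 - i) (by omega)
      have h6 : g (l - 2 - i) = i := by omega
      rw [h6] at h5
      omega
    have hf0B : f 0 = l - 1 := by
      by_contra hc
      have h1 : f 0 = l - 2 := by omega
      have h2 : g (l - 2) = 0 := by
        have h := hgf 0 hk0
        rw [h1] at h
        exact h
      have := dg2
      omega
    by_cases hii : f (l - 2) = l - 2
    · -- case (ii)
      have hP3 : ∀ i, l ≤ i → i < k → f i = k + l - 1 - i := by
        have hge : ∀ i, l ≤ i → i < k → l ≤ f i := by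
          intro i hi hik
          have h6 := F6 i hi hik
          have hne1 : f i ≠ l - 2 := fun h => by
            have := hinjf i (l - 2) hik hl2k (by rw [h, hii])
            omega
          have hne2 : f i ≠ l - 1 := fun h => by
            have := hinjf i 0 hik hk0 (by rw [h, hf0B])
            omega
          omega
        intro i hi hik
        have h1 := df3 l i (le_refl _) hi hik
        have h2 := df3 i (k - 1) hi (by omega) (by omega)
        have h3 := hge (k - 1) (by omega) (by omega)
        have h4 := hflt l (by omega)
        have h5 := hge i hi hik
        omega
      right; left
      intro i hik
      by_cases h0 : i = 0
      · rw [h0, hf0B]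
        split_ifs <;> omega
      by_cases h1 : i ≤ l - 3
      · have := hB4 i (by omega) h1
        split_ifs <;> omega
      by_cases h2 : i = l - 2
      · rw [h2, hii]
        split_ifs <;> omega
      by_cases h3 : i = l - 1
      · rw [h3, hfl1B]
        split_ifs <;> omega
      · have := hP3 i (by omega) hik
        split_ifs <;> omega
    · -- case (i)
      have hge2 : l ≤ f (l - 2) := by
        have hne2 : f (l - 2) ≠ l - 1 := fun h => by
          have := hinjf (l - 2) 0 hl2k hk0 (by rw [h, hf0B])
          omega
        omega
      have hbig : ∀ v, l ≤ v → v < k → v ≠ f (l - 2) → l ≤ g v := by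
        intro v hv hvk hne
        by_contra hp
        push_neg at hp
        have hpk : g v < k := hglt v hvk
        have hfp : f (g v) = v := hfg v hvk
        by_cases h0 : g v = 0
        · rw [h0] at hfp; omega
        rcases Nat.lt_or_ge (g v) (l - 2) with h | h
        · have := hB1 (g v) (by omega) (by omega); omega
        · have h1 : g v = l - 2 ∨ g v = l - 1 := by omega
          rcases h1 with h1 | h1 <;> rw [h1] at hfp
          · exact hne hfp.symm
          · omega
      have hfl2v : f (l - 2) = k - 1 := by
        by_contra hne
        have hvk : f (l - 2) < k := hflt (l - 2) hl2k
        have h1 : l ≤ g (f (l - 2) + 1) := hbig (f (l - 2) + 1) (by omega) (by omega) (by omega)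
        have h2 := hgf (l - 2) hl2k
        have h3 := dg3 (f (l - 2)) (f (l - 2) + 1) (by omega) (by omega) (by omega)
        omega
      have hfk1 : f (k - 1) = l - 2 := by
        have hpk : g (l - 2) < k := hglt (l - 2) hl2k
        have hfp : f (g (l - 2)) = l - 2 := hfg (l - 2) hl2k
        have hpge : l ≤ g (l - 2) := by
          by_contra hp
          push_neg at hp
          by_cases h0 : g (l - 2) = 0
          · rw [h0] at hfp; omega
          rcases Nat.lt_or_ge (g (l - 2)) (l - 2) with h | h
          · have := hB1 (g (l - 2)) (by omega) (by omega); omega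
          · have h1 : g (l - 2) = l - 2 ∨ g (l - 2) = l - 1 := by omega
            rcases h1 with h1 | h1 <;> rw [h1] at hfp <;> omega
        have hple : g (l - 2) = k - 1 := by
          by_contra hp2
          have h5 : g (l - 2) + 1 < k := by omega
          have h6 := hdecf (g (l - 2) + 1) (by omega) h5 (by omega) (by omega)
          rw [Nat.add_sub_cancel, hfp] at h6
          have := F6 (g (l - 2) + 1) (by omega) h5
          omega
        rw [← hple]
        exact hfp
      have hP3 : ∀ i, l ≤ i → i ≤ k - 2 → f i = k + l - 2 - i := by
        have hrange : ∀ i, l ≤ i → i ≤ k - 2 → l ≤ f i ∧ f i ≤ k - 2 := by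
          intro i hi hik
          have h6 := F6 i hi (by omega)
          have hne1 : f i ≠ l - 2 := fun h => by
            have := hinjf i (k - 1) (by omega) (by omega) (by rw [h, hfk1])
            omega
          have hne2 : f i ≠ l - 1 := fun h => by
            have := hinjf i 0 (by omega) hk0 (by rw [h, hf0B])
            omega
          have hne3 : f i ≠ k - 1 := fun h => by
            have := hinjf i (l - 2) (by omega) hl2k (by rw [h, hfl2v])
            omega
          have := hflt i (by omega)
          omega
        intro i hi hik
        have h1 := df3 l i (le_refl _) hi (by omega)
        have h2 := df3 i (k - 2) hi hik (by omega)
        have h3 := (hrange (k - 2) (by omega) (le_refl _)).1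
        have h4 := (hrange l (le_refl _) (by omega)).2
        have h5 := (hrange i hi hik).1
        omega
      left
      intro i hik
      by_cases h0 : i = 0
      · rw [h0, hf0B]
        split_ifs <;> omega
      by_cases h1 : i ≤ l - 3
      · have := hB4 i (by omega) h1
        split_ifs <;> omega
      by_cases h2 : i = l - 2
      · rw [h2, hfl2v]
        split_ifs <;> omega
      by_cases h3 : i = l - 1
      · rw [h3, hfl1B]
        split_ifs <;> omega
      by_cases h4 : i = k - 1
      · rw [h4, hfk1]
        split_ifs <;> omega
      · have := hP3 i (by omega) (by omega)
        split_ifs <;> omega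

set_option maxHeartbeats 1000000 in
theorem statement13 (k l : ℕ) (hl : 2 < l) (hk : l < k) (σ1 σ : Equiv.Perm (Fin k))
    (hσ1 : ∀ i : Fin k, (σ1 i : ℕ) + 1 =
      if (i : ℕ) + 1 = 1 then l
      else if (i : ℕ) + 1 ≤ l - 2 then l - ((i : ℕ) + 1)
      else if (i : ℕ) + 1 = l - 1 then k
      else if (i : ℕ) + 1 = l then 1
      else if (i : ℕ) + 1 = k then l - 1
      else l + k - ((i : ℕ) + 1))
    (hle : BruhatLE σ σ1)
    (hD : Dset σ ∪ Dset σ⁻¹ ⊆ ({l - 2, l, k} : Set ℕ)) :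
    σ = σ1 ∨
    (∀ i : Fin k, (σ i : ℕ) + 1 =
      if (i : ℕ) + 1 = 1 then l
      else if (i : ℕ) + 1 ≤ l - 2 then l - ((i : ℕ) + 1)
      else if (i : ℕ) + 1 = l - 1 then l - 1
      else if (i : ℕ) + 1 = l then 1
      else k + l + 1 - ((i : ℕ) + 1)) ∨
    (∀ i : Fin k, (σ i : ℕ) + 1 =
      if (i : ℕ) + 1 ≤ l - 2 then l - 1 - ((i : ℕ) + 1)
      else if (i : ℕ) + 1 = l - 1 then k
      else if (i : ℕ) + 1 = l then l
      else if (i : ℕ) + 1 = k then l - 1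
      else k + l - ((i : ℕ) + 1)) ∨
    (∀ i : Fin k, (σ i : ℕ) + 1 =
      if (i : ℕ) + 1 ≤ l - 2 then l - 1 - ((i : ℕ) + 1)
      else if (i : ℕ) + 1 = l - 1 then l
      else if (i : ℕ) + 1 = l then l - 1
      else k + l + 1 - ((i : ℕ) + 1)) := by
  classical
  have hk0 : 0 < k := by omega
  have hl1k : l - 1 < k := by omega
  have hl2k : l - 2 < k := by omega
  have hl3k : l - 3 < k := by omega
  obtain ⟨f, hfv⟩ : ∃ f : ℕ → ℕ, ∀ (i : ℕ) (h : i < k), f i = ((σ ⟨i, h⟩ : Fin k) : ℕ) :=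
    ⟨fun i => if h : i < k then ((σ ⟨i, h⟩ : Fin k) : ℕ) else 0, fun i h => dif_pos h⟩
  obtain ⟨g, hgv⟩ : ∃ g : ℕ → ℕ, ∀ (i : ℕ) (h : i < k), g i = ((σ⁻¹ ⟨i, h⟩ : Fin k) : ℕ) :=
    ⟨fun i => if h : i < k then ((σ⁻¹ ⟨i, h⟩ : Fin k) : ℕ) else 0, fun i h => dif_pos h⟩
  obtain ⟨f1, hf1v⟩ : ∃ f1 : ℕ → ℕ, ∀ (i : ℕ) (h : i < k), f1 i = ((σ1 ⟨i, h⟩ : Fin k) : ℕ) :=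
    ⟨fun i => if h : i < k then ((σ1 ⟨i, h⟩ : Fin k) : ℕ) else 0, fun i h => dif_pos h⟩
  have hflt : ∀ i, i < k → f i < k := fun i h => by rw [hfv i h]; exact (σ ⟨i, h⟩).isLt
  have hglt : ∀ i, i < k → g i < k := fun i h => by rw [hgv i h]; exact (σ⁻¹ ⟨i, h⟩).isLt
  have hgf : ∀ i, i < k → g (f i) = i := by
    intro i h
    rw [hgv _ (hflt i h)]
    have he : (⟨f i, hflt i h⟩ : Fin k) = σ ⟨i, h⟩ := Fin.ext (by rw [← hfv i h])
    rw [he, show ∀ x, σ⁻¹ (σ x) = x from fun x => σ.symm_apply_apply x]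
  have hfg : ∀ v, v < k → f (g v) = v := by
    intro v h
    rw [hfv _ (hglt v h)]
    have he : (⟨g v, hglt v h⟩ : Fin k) = σ⁻¹ ⟨v, h⟩ := Fin.ext (by rw [← hgv v h])
    rw [he, show ∀ x, σ (σ⁻¹ x) = x from fun x => σ.apply_symm_apply x]
  have hf1 : ∀ i, ∀ h : i < k, f1 i + 1 =
      if i + 1 = 1 then l
      else if i + 1 ≤ l - 2 then l - (i + 1)
      else if i + 1 = l - 1 then k
      else if i + 1 = l then 1
      else if i + 1 = k then l - 1
      else l + k - (i + 1) := by
    intro i h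
    rw [hf1v i h]
    exact hσ1 ⟨i, h⟩
  have hnotD : ∀ i, i < k → i ≠ l - 2 → i ≠ l → i ∉ Dset σ ∧ i ∉ Dset σ⁻¹ := by
    intro i hik h2 h3
    constructor
    · intro hmem
      have hh := hD (Set.mem_union_left _ hmem)
      simp only [Set.mem_insert_iff, Set.mem_singleton_iff] at hh
      omega
    · intro hmem
      have hh := hD (Set.mem_union_right _ hmem)
      simp only [Set.mem_insert_iff, Set.mem_singleton_iff] at hh
      omega
  have hdecf : ∀ i, 0 < i → i < k → i ≠ l - 2 → i ≠ l → f i < f (i - 1) := by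
    intro i h0 hik h2 h3
    have hnd := (hnotD i hik h2 h3).1
    simp only [Dset, Set.mem_union, Set.mem_setOf_eq, Set.mem_singleton_iff, not_or] at hnd
    push_neg at hnd
    have hlt := hnd.1 (by omega) hik
    have hle2 : f i ≤ f (i - 1) := by
      rw [hfv i hik, hfv (i - 1) (by omega)]
      exact hlt
    have hne : f i ≠ f (i - 1) := fun hh => by
      have h5 := hgf i hik
      have h6 := hgf (i - 1) (by omega)
      rw [hh] at h5
      omega
    omega
  have hdecg : ∀ i, 0 < i → i < k → i ≠ l - 2 → i ≠ l → g i < g (i - 1) := by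
    intro i h0 hik h2 h3
    have hnd := (hnotD i hik h2 h3).2
    simp only [Dset, Set.mem_union, Set.mem_setOf_eq, Set.mem_singleton_iff, not_or] at hnd
    push_neg at hnd
    have hlt := hnd.1 (by omega) hik
    have hle2 : g i ≤ g (i - 1) := by
      rw [hgv i hik, hgv (i - 1) (by omega)]
      exact hlt
    have hne : g i ≠ g (i - 1) := fun hh => by
      have h5 := hfg i hik
      have h6 := hfg (i - 1) (by omega)
      rw [hh] at h5
      omega
    omega
  have hnotle : ∀ (a b : ℕ) (ha : a < k) (hb : b < k), b < f a →
      ¬ ((σ ⟨a, ha⟩ : Fin k) ≤ (⟨b, hb⟩ : Fin k)) := by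
    intro a b ha hb hba hcon
    have h3 : ((σ ⟨a, ha⟩ : Fin k) : ℕ) ≤ b := hcon
    have h2 := hfv a ha
    omega
  have hrank : ∀ (c ii jj : ℕ) (hii : ii < k) (hjj : jj < k) (w : ℕ → ℕ),
      (∀ n, n < c → w n < k ∧ w n ≤ ii ∧ f1 (w n) ≤ jj) →
      (∀ m n, m < c → n < c → w m = w n → m = n) →
      c ≤ rankFn σ (⟨ii, hii⟩ : Fin k) (⟨jj, hjj⟩ : Fin k) := by
    intro c ii jj hii hjj w hw hinj
    refine le_trans (st13_rank_lb σ1 _ _ c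
      (fun n => if h : w n < k then ⟨w n, h⟩ else ⟨0, hk0⟩) ?_ ?_) (hle _ _)
    · intro m n hm hn hmn
      have h1 := (hw m hm).1
      have h2 := (hw n hn).1
      simp only [dif_pos h1, dif_pos h2, Fin.mk.injEq] at hmn
      exact hinj m n hm hn hmn
    · intro n hn
      obtain ⟨h1, h2, h3⟩ := hw n hn
      simp only [dif_pos h1]
      constructor
      · exact Fin.mk_le_mk.mpr h2
      · show ((σ1 ⟨w n, h1⟩ : Fin k) : ℕ) ≤ jj
        rw [← hf1v (w n) h1]
        exact h3
  have Ra : 1 ≤ rankFn σ (⟨0, hk0⟩ : Fin k) (⟨l - 1, hl1k⟩ : Fin k) := by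
    apply hrank 1 0 (l - 1) hk0 hl1k (fun _ => 0)
    · intro n hn
      refine ⟨hk0, le_refl _, ?_⟩
      have hv := hf1 0 hk0
      split_ifs at hv <;> omega
    · intro m n hm hn _; omega
  have Rc : l - 2 ≤ rankFn σ (⟨l - 1, hl1k⟩ : Fin k) (⟨l - 3, hl3k⟩ : Fin k) := by
    apply hrank (l - 2) (l - 1) (l - 3) hl1k hl3k (fun n => if n = l - 3 then l - 1 else n + 1)
    · intro n hn
      by_cases h : n = l - 3
      · rw [if_pos h]
        refine ⟨hl1k, le_refl _, ?_⟩
        have hv := hf1 (l - 1) hl1k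
        split_ifs at hv <;> omega
      · rw [if_neg h]
        refine ⟨by omega, by omega, ?_⟩
        have hv := hf1 (n + 1) (by omega)
        split_ifs at hv <;> omega
    · intro m n hm hn hmn
      split_ifs at hmn <;> omega
  have Re : l - 1 ≤ rankFn σ (⟨l - 1, hl1k⟩ : Fin k) (⟨l - 1, hl1k⟩ : Fin k) := by
    apply hrank (l - 1) (l - 1) (l - 1) hl1k hl1k (fun n => if n = l - 2 then l - 1 else n)
    · intro n hn
      by_cases h : n = l - 2
      · rw [if_pos h]
        refine ⟨hl1k, le_refl _, ?_⟩
        have hv := hf1 (l - 1) hl1k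
        split_ifs at hv <;> omega
      · rw [if_neg h]
        refine ⟨by omega, by omega, ?_⟩
        have hv := hf1 n (by omega)
        split_ifs at hv <;> omega
    · intro m n hm hn hmn
      split_ifs at hmn <;> omega
  have Rf : l - 3 ≤ rankFn σ (⟨l - 3, hl3k⟩ : Fin k) (⟨l - 3, hl3k⟩ : Fin k) := by
    apply hrank (l - 3) (l - 3) (l - 3) hl3k hl3k (fun n => n + 1)
    · intro n hn
      refine ⟨by omega, by omega, ?_⟩
      have hv := hf1 (n + 1) (by omega)
      split_ifs at hv <;> omega
    · intro m n hm hn hmn; omega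
  have F1 : f 0 ≤ l - 1 := by
    have h := st13_rank_row_full σ (⟨0, hk0⟩ : Fin k) (⟨l - 1, hl1k⟩ : Fin k)
      (by show 0 + 1 ≤ _; omega) ⟨0, hk0⟩ (le_refl _)
    have h2 : ((σ ⟨0, hk0⟩ : Fin k) : ℕ) ≤ l - 1 := h
    have h3 := hfv 0 hk0
    omega
  have F3 : ∀ v, v ≤ l - 3 → g v ≤ l - 1 := by
    intro v hv
    have hvk : v < k := by omega
    have h := st13_rank_col_full σ (⟨l - 1, hl1k⟩ : Fin k) (⟨l - 3, hl3k⟩ : Fin k)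
      (by show l - 3 + 1 ≤ _; omega) ⟨v, hvk⟩ (Fin.mk_le_mk.mpr hv)
    have h2 : ((σ.symm ⟨v, hvk⟩ : Fin k) : ℕ) ≤ l - 1 := h
    have h3 : g v = ((σ.symm ⟨v, hvk⟩ : Fin k) : ℕ) := hgv v hvk
    omega
  have F4 : f (l - 1) ≤ l - 1 := by
    by_contra hcon
    push_neg at hcon
    have hd2 : f (l - 1) < f (l - 2) := by
      have h := hdecf (l - 1) (by omega) hl1k (by omega) (by omega)
      have he : l - 1 - 1 = l - 2 := by omega
      rw [he] at h
      exact h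
    have hub : rankFn σ (⟨l - 1, hl1k⟩ : Fin k) (⟨l - 1, hl1k⟩ : Fin k) + 2 ≤ l - 1 + 1 :=
      st13_rank_ub2 σ _ _ (⟨l - 2, hl2k⟩ : Fin k) (⟨l - 1, hl1k⟩ : Fin k)
        (Fin.ne_of_val_ne (show l - 2 ≠ l - 1 by omega))
        (Fin.mk_le_mk.mpr (by omega)) (le_refl _)
        (hnotle (l - 2) (l - 1) hl2k hl1k (by omega))
        (hnotle (l - 1) (l - 1) hl1k hl1k (by omega))
    omega
  have F5 : l - 2 ≤ f 0 → ∀ u, 1 ≤ u → u ≤ l - 3 → f u ≤ l - 3 := by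
    intro hB u h1 h2
    by_contra hc
    push_neg at hc
    have huk : u < k := by omega
    have hub : rankFn σ (⟨l - 3, hl3k⟩ : Fin k) (⟨l - 3, hl3k⟩ : Fin k) + 2 ≤ l - 3 + 1 :=
      st13_rank_ub2 σ _ _ (⟨0, hk0⟩ : Fin k) (⟨u, huk⟩ : Fin k)
        (Fin.ne_of_val_ne (show (0 : ℕ) ≠ u by omega))
        (Fin.mk_le_mk.mpr (by omega)) (Fin.mk_le_mk.mpr h2)
        (hnotle 0 (l - 3) hk0 hl3k (by omega))
        (hnotle u (l - 3) huk hl3k (by omega))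
    omega
  have hcomb := st13_comb k l hl hk f g hflt hglt hgf hfg hdecf hdecg F1 F3 F4 F5
  rcases hcomb with h | h | h | h
  · left
    refine Equiv.ext fun x => ?_
    have e1 := h x.val x.isLt
    rw [hfv x.val x.isLt] at e1
    simp only [Fin.eta] at e1
    have e2 := hσ1 x
    exact Fin.ext (by omega)
  · right; left
    intro x
    have e1 := h x.val x.isLt
    rw [hfv x.val x.isLt] at e1
    simp only [Fin.eta] at e1
    exact e1
  · right; right; left
    intro x
    have e1 := h x.val x.isLt
    rw [hfv x.val x.isLt] at e1
    simp only [Fin.eta] at e1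
    exact e1
  · right; right; right
    intro x
    have e1 := h x.val x.isLt
    rw [hfv x.val x.isLt] at e1
    simp only [Fin.eta] at e1
    exact e1
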